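/- The optimal value of the Lovász theta SDP of the graph G₆ equals √5: every primal feasible matrix X satisfies ∑_{i=1}^6 X_{ii} ≤ √5, and this value is attained. (Hence the quantum bound of the canonical non-contextuality inequality ∑_{i=1}^6 p_i ≤ 2 associated with G₆ equals √5.) -/

import Mathlib

/-- Adjacency in the graph `G₆` on the vertex set `{1, …, 6}` with edge set
`{ {1,3}, {1,4}, {1,6}, {2,4}, {2,5}, {2,6}, {3,5}, {4,6} }`. -/
def g6Adj (i j : ℕ) : Prop :=
  (i, j) ∈ [(1, 3), (1, 4), (1, 6), (2, 4), (2, 5), (2, 6), (3, 5), (4, 6)] ∨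
    (j, i) ∈ [(1, 3), (1, 4), (1, 6), (2, 4), (2, 5), (2, 6), (3, 5), (4, 6)]

/-- A real symmetric `7 × 7` matrix `X` (rows/columns indexed `0, 1, …, 6`) is primal feasible
for the Lovász theta SDP of `G₆` if it is positive semidefinite, `X 0 0 = 1`,
`X i i = X 0 i` for `i ∈ {1, …, 6}`, and `X i j = 0` on edges of `G₆`. -/
def g6PrimalFeasible (X : Matrix (Fin 7) (Fin 7) ℝ) : Prop :=
  X.PosSemidef ∧ X 0 0 = 1 ∧
    (∀ i : Fin 7, i.val ≠ 0 → X i i = X 0 i) ∧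
    (∀ i j : Fin 7, i.val ≠ 0 → j.val ≠ 0 → g6Adj i.val j.val → X i j = 0)

instance (i j : ℕ) : Decidable (g6Adj i j) := by unfold g6Adj; infer_instance

open scoped Matrix

set_option maxHeartbeats 2000000
set_option maxRecDepth 4000

@[simp] lemma cons_val_five {α : Type*} {m : ℕ} (x : α)
    (u : Fin m.succ.succ.succ.succ.succ → α) :
    Matrix.vecCons x u 5 =
      Matrix.vecHead (Matrix.vecTail (Matrix.vecTail (Matrix.vecTail (Matrix.vecTail u)))) := rfl

@[simp] lemma cons_val_six {α : Type*} {m : ℕ} (x : α)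
    (u : Fin m.succ.succ.succ.succ.succ.succ → α) :
    Matrix.vecCons x u 6 =
      Matrix.vecHead (Matrix.vecTail (Matrix.vecTail (Matrix.vecTail (Matrix.vecTail
        (Matrix.vecTail u))))) := rfl

/-- The primal optimal solution. -/
noncomputable def Xopt : Matrix (Fin 7) (Fin 7) ℝ :=
  !![((1:ℝ)), ((1/5)*(Real.sqrt 5)), ((1/5)*(Real.sqrt 5)), ((1/5)*(Real.sqrt 5)), ((1/5)*(Real.sqrt 5)), ((1/5)*(Real.sqrt 5)), (0:ℝ);
     ((1/5)*(Real.sqrt 5)), ((1/5)*(Real.sqrt 5)), ((1/2) + (-1/10)*(Real.sqrt 5)), (0:ℝ), (0:ℝ), ((1/2) + (-1/10)*(Real.sqrt 5)), (0:ℝ);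
     ((1/5)*(Real.sqrt 5)), ((1/2) + (-1/10)*(Real.sqrt 5)), ((1/5)*(Real.sqrt 5)), ((1/2) + (-1/10)*(Real.sqrt 5)), (0:ℝ), (0:ℝ), (0:ℝ);
     ((1/5)*(Real.sqrt 5)), (0:ℝ), ((1/2) + (-1/10)*(Real.sqrt 5)), ((1/5)*(Real.sqrt 5)), ((1/2) + (-1/10)*(Real.sqrt 5)), (0:ℝ), (0:ℝ);
     ((1/5)*(Real.sqrt 5)), (0:ℝ), (0:ℝ), ((1/2) + (-1/10)*(Real.sqrt 5)), ((1/5)*(Real.sqrt 5)), ((1/2) + (-1/10)*(Real.sqrt 5)), (0:ℝ);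
     ((1/5)*(Real.sqrt 5)), ((1/2) + (-1/10)*(Real.sqrt 5)), (0:ℝ), (0:ℝ), ((1/2) + (-1/10)*(Real.sqrt 5)), ((1/5)*(Real.sqrt 5)), (0:ℝ);
     (0:ℝ), (0:ℝ), (0:ℝ), (0:ℝ), (0:ℝ), (0:ℝ), (0:ℝ)]

lemma sqrt5_sq : Real.sqrt 5 ^ 2 = 5 := Real.sq_sqrt (by norm_num)
lemma sqrt5_nonneg : (0:ℝ) ≤ Real.sqrt 5 := Real.sqrt_nonneg 5
lemma sqrt5_ge_one : (1:ℝ) ≤ Real.sqrt 5 := by nlinarith [sqrt5_sq, sqrt5_nonneg]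
lemma sqrt5_le_three : Real.sqrt 5 ≤ 3 := by nlinarith [sqrt5_sq, sqrt5_nonneg]

lemma Xopt_posSemidef : Xopt.PosSemidef := by
  refine Matrix.PosSemidef.of_dotProduct_mulVec_nonneg ?_ ?_
  · ext i j
    fin_cases i <;> fin_cases j <;> (try simp [Xopt, Matrix.conjTranspose_apply, Matrix.vecHead, Matrix.vecTail, Function.comp])
  · intro x
    have hq : star x ⬝ᵥ Xopt *ᵥ x =
        (((1:ℝ)) * x 0 + ((1/5)*(Real.sqrt 5)) * x 1 + ((1/5)*(Real.sqrt 5)) * x 2 + ((1/5)*(Real.sqrt 5)) * x 3 + ((1/5)*(Real.sqrt 5)) * x 4 + ((1/5)*(Real.sqrt 5)) * x 5)^2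
        + ((-1/5) + (1/5)*(Real.sqrt 5)) * (((1:ℝ)) * x 1 + ((-1/4) + (1/4)*(Real.sqrt 5)) * x 2 + ((-1/4) + (-1/4)*(Real.sqrt 5)) * x 3 + ((-1/4) + (-1/4)*(Real.sqrt 5)) * x 4 + ((-1/4) + (1/4)*(Real.sqrt 5)) * x 5)^2
        + ((1/10)*(Real.sqrt 5)) * (((1:ℝ)) * x 2 + ((-1/2) + (1/2)*(Real.sqrt 5)) * x 3 + ((1/2) + (-1/2)*(Real.sqrt 5)) * x 4 + ((-1:ℝ)) * x 5)^2 := by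
      simp [Xopt, dotProduct, Matrix.mulVec, Fin.sum_univ_seven, Matrix.vecHead,
        Matrix.vecTail, Function.comp]
      linear_combination (((-1/25:ℝ)) * x 1 * x 1 + ((-9/50:ℝ)) * x 1 * x 2 + ((1/50:ℝ)) * x 1 * x 3 + ((1/50:ℝ)) * x 1 * x 4 + ((-9/50:ℝ)) * x 1 * x 5 + ((-1/400) + (-1/80)*(Real.sqrt 5)) * x 2 * x 2 + ((-41/200) + (1/40)*(Real.sqrt 5)) * x 2 * x 3 + ((-1/200) + (1/40)*(Real.sqrt 5)) * x 2 * x 4 + ((-1/200) + (-1/40)*(Real.sqrt 5)) * x 2 * x 5 + ((-1/400) + (-3/80)*(Real.sqrt 5)) * x 3 * x 3 + ((-41/200) + (1/40)*(Real.sqrt 5)) * x 3 * x 4 + ((-1/200) + (1/40)*(Real.sqrt 5)) * x 3 * x 5 + ((-1/400) + (-3/80)*(Real.sqrt 5)) * x 4 * x 4 + ((-41/200) + (1/40)*(Real.sqrt 5)) * x 4 * x 5 + ((-1/400) + (-1/80)*(Real.sqrt 5)) * x 5 * x 5) * sqrt5_sq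
    rw [hq]
    have d1 : (0:ℝ) ≤ ((-1/5) + (1/5)*(Real.sqrt 5)) := by nlinarith [sqrt5_ge_one]
    have d2 : (0:ℝ) ≤ ((1/10)*(Real.sqrt 5)) := by nlinarith [sqrt5_nonneg]
    have := sq_nonneg (((1:ℝ)) * x 0 + ((1/5)*(Real.sqrt 5)) * x 1 + ((1/5)*(Real.sqrt 5)) * x 2 + ((1/5)*(Real.sqrt 5)) * x 3 + ((1/5)*(Real.sqrt 5)) * x 4 + ((1/5)*(Real.sqrt 5)) * x 5)
    have := mul_nonneg d1 (sq_nonneg (((1:ℝ)) * x 1 + ((-1/4) + (1/4)*(Real.sqrt 5)) * x 2 + ((-1/4) + (-1/4)*(Real.sqrt 5)) * x 3 + ((-1/4) + (-1/4)*(Real.sqrt 5)) * x 4 + ((-1/4) + (1/4)*(Real.sqrt 5)) * x 5))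
    have := mul_nonneg d2 (sq_nonneg (((1:ℝ)) * x 2 + ((-1/2) + (1/2)*(Real.sqrt 5)) * x 3 + ((1/2) + (-1/2)*(Real.sqrt 5)) * x 4 + ((-1:ℝ)) * x 5))
    linarith

/-- The optimal value of the Lovász theta SDP of `G₆` equals `√5`: every primal feasible `X`
has objective value `∑_{i=1}^6 X_{ii} ≤ √5`, and this value is attained. -/
theorem g6_lovaszTheta_eq_sqrt5 :
    IsGreatest
      {t : ℝ | ∃ X : Matrix (Fin 7) (Fin 7) ℝ,
        g6PrimalFeasible X ∧ t = ∑ i : Fin 6, X i.succ i.succ}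
      (Real.sqrt 5) := by
  have hs : Real.sqrt 5 ^ 2 = 5 := sqrt5_sq
  have hs0 : (0:ℝ) ≤ Real.sqrt 5 := sqrt5_nonneg
  constructor
  · refine ⟨Xopt, ⟨Xopt_posSemidef, ?_, ?_, ?_⟩, ?_⟩
    · simp [Xopt, Matrix.vecHead, Matrix.vecTail]
    · intro i hi
      fin_cases i <;> simp_all [Xopt, Matrix.vecHead, Matrix.vecTail, Function.comp]
    · intro i j hi hj hadj
      fin_cases i <;> fin_cases j <;>
        first
          | exact absurd rfl hi
          | exact absurd rfl hj
          | exact absurd hadj (by decide)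
          | simp [Xopt, Matrix.vecHead, Matrix.vecTail, Function.comp]
    · rw [Fin.sum_univ_six]
      norm_num [Xopt, Matrix.vecHead, Matrix.vecTail, Function.comp, Fin.succ]
      ring
  · rintro t ⟨X, ⟨hpsd, h00, hdiag, hedge⟩, rfl⟩
    have hsym : ∀ i j : Fin 7, X j i = X i j := fun i j => by
      have h := congrFun (congrFun hpsd.1 i) j
      simpa [Matrix.conjTranspose_apply] using h
    have hd1 : X 1 1 = X 0 1 := hdiag 1 (by decide)
    have hd2 : X 2 2 = X 0 2 := hdiag 2 (by decide)
    have hd3 : X 3 3 = X 0 3 := hdiag 3 (by decide)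
    have hd4 : X 4 4 = X 0 4 := hdiag 4 (by decide)
    have hd5 : X 5 5 = X 0 5 := hdiag 5 (by decide)
    have hd6 : X 6 6 = X 0 6 := hdiag 6 (by decide)
    have he13 : X 1 3 = 0 := hedge 1 3 (by decide) (by decide) (by decide)
    have he14 : X 1 4 = 0 := hedge 1 4 (by decide) (by decide) (by decide)
    have he16 : X 1 6 = 0 := hedge 1 6 (by decide) (by decide) (by decide)
    have he24 : X 2 4 = 0 := hedge 2 4 (by decide) (by decide) (by decide)
    have he25 : X 2 5 = 0 := hedge 2 5 (by decide) (by decide) (by decide)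
    have he26 : X 2 6 = 0 := hedge 2 6 (by decide) (by decide) (by decide)
    have he35 : X 3 5 = 0 := hedge 3 5 (by decide) (by decide) (by decide)
    have he46 : X 4 6 = 0 := hedge 4 6 (by decide) (by decide) (by decide)
    have h0 := hpsd.dotProduct_mulVec_nonneg ![((1:ℝ)), ((-1/5)*(Real.sqrt 5)), ((-1/5)*(Real.sqrt 5)), ((-1/5)*(Real.sqrt 5)), ((-1/5)*(Real.sqrt 5)), ((-1/5)*(Real.sqrt 5)), ((-1/5)*(Real.sqrt 5))]
    have h1 := hpsd.dotProduct_mulVec_nonneg ![(0:ℝ), ((1:ℝ)), ((-1/4) + (-1/4)*(Real.sqrt 5)), ((-1/4) + (1/4)*(Real.sqrt 5)), ((-1/4) + (1/4)*(Real.sqrt 5)), ((-1/4) + (-1/4)*(Real.sqrt 5)), ((-1/4) + (1/4)*(Real.sqrt 5))]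
    have h2 := hpsd.dotProduct_mulVec_nonneg ![(0:ℝ), (0:ℝ), ((1:ℝ)), ((-1/2) + (-1/2)*(Real.sqrt 5)), ((1/2) + (1/2)*(Real.sqrt 5)), ((-1:ℝ)), ((1/2) + (1/2)*(Real.sqrt 5))]
    have key : Real.sqrt 5 - (X 1 1 + X 2 2 + X 3 3 + X 4 4 + X 5 5 + X 6 6)
        = ((1)*(Real.sqrt 5)) * (star ![((1:ℝ)), ((-1/5)*(Real.sqrt 5)), ((-1/5)*(Real.sqrt 5)), ((-1/5)*(Real.sqrt 5)), ((-1/5)*(Real.sqrt 5)), ((-1/5)*(Real.sqrt 5)), ((-1/5)*(Real.sqrt 5))] ⬝ᵥ X *ᵥ ![((1:ℝ)), ((-1/5)*(Real.sqrt 5)), ((-1/5)*(Real.sqrt 5)), ((-1/5)*(Real.sqrt 5)), ((-1/5)*(Real.sqrt 5)), ((-1/5)*(Real.sqrt 5)), ((-1/5)*(Real.sqrt 5))])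
          + ((1) + (-1/5)*(Real.sqrt 5)) * (star ![(0:ℝ), ((1:ℝ)), ((-1/4) + (-1/4)*(Real.sqrt 5)), ((-1/4) + (1/4)*(Real.sqrt 5)), ((-1/4) + (1/4)*(Real.sqrt 5)), ((-1/4) + (-1/4)*(Real.sqrt 5)), ((-1/4) + (1/4)*(Real.sqrt 5))] ⬝ᵥ X *ᵥ ![(0:ℝ), ((1:ℝ)), ((-1/4) + (-1/4)*(Real.sqrt 5)), ((-1/4) + (1/4)*(Real.sqrt 5)), ((-1/4) + (1/4)*(Real.sqrt 5)), ((-1/4) + (-1/4)*(Real.sqrt 5)), ((-1/4) + (1/4)*(Real.sqrt 5))])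
          + ((3/4) + (-1/4)*(Real.sqrt 5)) * (star ![(0:ℝ), (0:ℝ), ((1:ℝ)), ((-1/2) + (-1/2)*(Real.sqrt 5)), ((1/2) + (1/2)*(Real.sqrt 5)), ((-1:ℝ)), ((1/2) + (1/2)*(Real.sqrt 5))] ⬝ᵥ X *ᵥ ![(0:ℝ), (0:ℝ), ((1:ℝ)), ((-1/2) + (-1/2)*(Real.sqrt 5)), ((1/2) + (1/2)*(Real.sqrt 5)), ((-1:ℝ)), ((1/2) + (1/2)*(Real.sqrt 5))]) := by
      simp only [dotProduct, Matrix.mulVec, Fin.sum_univ_seven, Pi.star_apply,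
        star_trivial, Matrix.cons_val_zero, Matrix.cons_val_one, Matrix.head_cons,
        Matrix.cons_val_two, Matrix.cons_val_three, Matrix.cons_val_four, cons_val_five,
        cons_val_six, Matrix.tail_cons]
      linear_combination ((1/5)*(Real.sqrt 5)^2) * hsym 0 1 + ((1/5)*(Real.sqrt 5)^2) * hsym 0 2 + ((1/5)*(Real.sqrt 5)^2) * hsym 0 3 + ((1/5)*(Real.sqrt 5)^2) * hsym 0 4 + ((1/5)*(Real.sqrt 5)^2) * hsym 0 5 + ((1/5)*(Real.sqrt 5)^2) * hsym 0 6 + ((1/4) + (1/5)*(Real.sqrt 5) + (-1/20)*(Real.sqrt 5)^2 + (-1/25)*(Real.sqrt 5)^3) * hsym 1 2 + ((1/4) + (-3/10)*(Real.sqrt 5) + (1/20)*(Real.sqrt 5)^2 + (-1/25)*(Real.sqrt 5)^3) * hsym 1 3 + ((1/4) + (-3/10)*(Real.sqrt 5) + (1/20)*(Real.sqrt 5)^2 + (-1/25)*(Real.sqrt 5)^3) * hsym 1 4 + ((1/4) + (1/5)*(Real.sqrt 5) + (-1/20)*(Real.sqrt 5)^2 + (-1/25)*(Real.sqrt 5)^3)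 * hsym 1 5 + ((1/4) + (-3/10)*(Real.sqrt 5) + (1/20)*(Real.sqrt 5)^2 + (-1/25)*(Real.sqrt 5)^3) * hsym 1 6 + ((5/16) + (21/80)*(Real.sqrt 5) + (-1/16)*(Real.sqrt 5)^2 + (-21/400)*(Real.sqrt 5)^3) * hsym 2 3 + ((-7/16) + (-19/80)*(Real.sqrt 5) + (3/16)*(Real.sqrt 5)^2 + (-21/400)*(Real.sqrt 5)^3) * hsym 2 4 + ((11/16) + (-29/80)*(Real.sqrt 5) + (-3/80)*(Real.sqrt 5)^2 + (-11/400)*(Real.sqrt 5)^3) * hsym 2 5 + ((-7/16) + (-19/80)*(Real.sqrt 5) + (3/16)*(Real.sqrt 5)^2 + (-21/400)*(Real.sqrt 5)^3) * hsym 2 6 + ((1/8) + (9/20)*(Real.sqrt 5) + (-1/40)*(Real.sqrt 5)^2 + (-9/100)*(Real.sqrt 5)^3) * hsym 3 4 + ((-7/16) + (-19/80)*(Real.sqrt 5) + (3/16)*(Real.sqrt 5)^2 + (-21/400)*(Real.sqrt 5)^3) * hsym 3 5 + ((1/8) + (9/20)*(Real.sqrt 5) + (-1/40)*(Real.sqrt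 5)^2 + (-9/100)*(Real.sqrt 5)^3) * hsym 3 6 + ((5/16) + (21/80)*(Real.sqrt 5) + (-1/16)*(Real.sqrt 5)^2 + (-21/400)*(Real.sqrt 5)^3) * hsym 4 5 + ((-1/4) + (-7/40)*(Real.sqrt 5) + (-3/20)*(Real.sqrt 5)^2 + (7/200)*(Real.sqrt 5)^3) * hsym 4 6 + ((5/16) + (21/80)*(Real.sqrt 5) + (-1/16)*(Real.sqrt 5)^2 + (-21/400)*(Real.sqrt 5)^3) * hsym 5 6 + ((-2) + (1/5)*(Real.sqrt 5) + (-1/25)*(Real.sqrt 5)^3) * hd1 + ((-29/16) + (11/80)*(Real.sqrt 5) + (-3/80)*(Real.sqrt 5)^2 + (-11/400)*(Real.sqrt 5)^3) * hd2 + ((-5/4) + (-7/40)*(Real.sqrt 5) + (-3/20)*(Real.sqrt 5)^2 + (7/200)*(Real.sqrt 5)^3) * hd3 + ((-5/4) + (-7/40)*(Real.sqrt 5) + (-3/20)*(Real.sqrt 5)^2 + (7/200)*(Real.sqrt 5)^3) * hd4 + ((-29/16) + (11/80)*(Real.sqrt 5) + (-3/80)*(Real.sqrt 5)^2 + (-11/400)*(Real.sqrt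 5)^3) * hd5 + ((-5/4) + (-7/40)*(Real.sqrt 5) + (-3/20)*(Real.sqrt 5)^2 + (7/200)*(Real.sqrt 5)^3) * hd6 + ((-1)*(Real.sqrt 5)) * h00 + ((1/2) + (-3/5)*(Real.sqrt 5) + (1/10)*(Real.sqrt 5)^2 + (-2/25)*(Real.sqrt 5)^3) * he13 + ((1/2) + (-3/5)*(Real.sqrt 5) + (1/10)*(Real.sqrt 5)^2 + (-2/25)*(Real.sqrt 5)^3) * he14 + ((1/2) + (-3/5)*(Real.sqrt 5) + (1/10)*(Real.sqrt 5)^2 + (-2/25)*(Real.sqrt 5)^3) * he16 + ((-7/8) + (-19/40)*(Real.sqrt 5) + (3/8)*(Real.sqrt 5)^2 + (-21/200)*(Real.sqrt 5)^3) * he24 + ((11/8) + (-29/40)*(Real.sqrt 5) + (-3/40)*(Real.sqrt 5)^2 + (-11/200)*(Real.sqrt 5)^3) * he25 + ((-7/8) + (-19/40)*(Real.sqrt 5) + (3/8)*(Real.sqrt 5)^2 + (-21/200)*(Real.sqrt 5)^3) * he26 + ((-7/8) + (-19/40)*(Real.sqrt 5) + (3/8)*(Real.sqrt 5)^2 + (-21/200)*(Real.sqrt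 5)^3) * he35 + ((-1/2) + (-7/20)*(Real.sqrt 5) + (-3/10)*(Real.sqrt 5)^2 + (7/100)*(Real.sqrt 5)^3) * he46 + (((2/5) + (-1/25)*(Real.sqrt 5)) * X 0 1 + ((29/80) + (-11/400)*(Real.sqrt 5)) * X 0 2 + ((1/4) + (7/200)*(Real.sqrt 5)) * X 0 3 + ((1/4) + (7/200)*(Real.sqrt 5)) * X 0 4 + ((29/80) + (-11/400)*(Real.sqrt 5)) * X 0 5 + ((1/4) + (7/200)*(Real.sqrt 5)) * X 0 6 + ((-1/10) + (-2/25)*(Real.sqrt 5)) * X 1 2 + ((-1/10) + (-2/25)*(Real.sqrt 5)) * X 1 5 + ((-1/8) + (-21/200)*(Real.sqrt 5)) * X 2 3 + ((-1/20) + (-9/50)*(Real.sqrt 5)) * X 3 4 + ((-1/20) + (-9/50)*(Real.sqrt 5)) * X 3 6 + ((-1/8) + (-21/200)*(Real.sqrt 5)) * X 4 5 + ((-1/8) + (-21/200)*(Real.sqrt 5)) * X 5 6) * hs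
    have nn1 : (0:ℝ) ≤ ((1) + (-1/5)*(Real.sqrt 5)) := by nlinarith [sqrt5_le_three, sqrt5_nonneg]
    have nn2 : (0:ℝ) ≤ ((3/4) + (-1/4)*(Real.sqrt 5)) := by nlinarith [sqrt5_le_three, sqrt5_nonneg]
    have hobj : ∑ i : Fin 6, X i.succ i.succ
        = X 1 1 + X 2 2 + X 3 3 + X 4 4 + X 5 5 + X 6 6 := by
      rw [Fin.sum_univ_six]
      rfl
    rw [hobj]
    nlinarith [key, mul_nonneg hs0 h0, mul_nonneg nn1 h1, mul_nonneg nn2 h2]
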